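/- Let ξ_1, …, ξ_l be i.i.d. standard Gaussians and σ_1², …, σ_l² ≥ 0. Then for every t ≥ 0, P(Σ_{j=1}^l σ_j²·ξ_j² > Σ_j σ_j² + 2·√(t·Σ_j σ_j⁴) + 2·t·max_j σ_j²) ≤ exp(−t). -/

import Mathlib

open Real MeasureTheory ProbabilityTheory
open scoped ENNReal NNReal


lemma core_log_ineq {u : ℝ} (hu0 : 0 ≤ u) (hu1 : u < 1) :
    -Real.log (1 - u) ≤ u + u^2/(2*(1-u)) := by
  have h1u : 0 < 1 - u := by linarith
  refine le_of_forall_pos_le_add fun ε hε => ?_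
  rcases eq_or_lt_of_le hu0 with h0 | hu0'
  · simp [← h0]; positivity
  obtain ⟨n, hn⟩ := exists_pow_lt_of_lt_one (mul_pos hε h1u) hu1
  have habs : |u| < 1 := by rw [abs_of_nonneg hu0]; exact hu1
  have key := Real.abs_log_sub_add_sum_range_le habs (n+1)
  rw [abs_le] at key
  have hlog : -Real.log (1 - u) ≤
      (∑ i ∈ Finset.range (n+1), u ^ (i + 1) / (i + 1)) + |u| ^ (n + 2) / (1 - |u|) := by
    linarith [key.2]
  have hsum : (∑ i ∈ Finset.range (n+1), u ^ (i + 1) / ((i:ℝ) + 1)) ≤ u + u^2/(2*(1-u)) := by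
    rw [Finset.sum_range_succ']
    have hbound : ∑ i ∈ Finset.range n, u ^ (i+1+1) / (((i+1:ℕ):ℝ) + 1)
        ≤ ∑ i ∈ Finset.range n, u^2/2 * u^i := by
      refine Finset.sum_le_sum fun i _ => ?_
      have h2 : (2:ℝ) ≤ ((i+1:ℕ):ℝ) + 1 := by push_cast; linarith
      have hA : (0:ℝ) ≤ u^2/2 * u^i := by positivity
      rw [div_le_iff₀ (by positivity)]
      calc u^(i+1+1) = (u^2/2*u^i) * 2 := by ring
        _ ≤ (u^2/2*u^i) * (((i+1:ℕ):ℝ) + 1) := mul_le_mul_of_nonneg_left h2 hA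
    have hgeom : ∑ i ∈ Finset.range n, u^2/2 * u^i ≤ u^2/(2*(1-u)) := by
      rw [← Finset.mul_sum]
      have hg : ∑ i ∈ Finset.range n, u^i ≤ (1-u)⁻¹ := by
        rw [geom_sum_eq hu1.ne, show u^n - 1 = -(1-u^n) by ring,
          show u - 1 = -(1-u) by ring, neg_div_neg_eq, inv_eq_one_div]
        gcongr
        nlinarith [pow_nonneg hu0 n]
      calc u^2/2 * ∑ i ∈ Finset.range n, u^i ≤ u^2/2 * (1-u)⁻¹ :=
            mul_le_mul_of_nonneg_left hg (by positivity)
        _ = u^2/(2*(1-u)) := by field_simp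
    have h0term : u ^ (0+1) / (((0:ℕ):ℝ) + 1) = u := by norm_num
    rw [h0term]
    linarith [hbound.trans hgeom]
  have hrem : |u| ^ (n + 2) / (1 - |u|) ≤ ε := by
    rw [abs_of_nonneg hu0, div_le_iff₀ h1u]
    calc u ^ (n+2) ≤ u ^ n := pow_le_pow_of_le_one hu0 hu1.le (by omega)
      _ ≤ ε * (1-u) := hn.le
  linarith


lemma gauss_rep : gaussianReal 0 1 =
    volume.withDensity (fun x => (↑(gaussianPDFReal 0 1 x).toNNReal : ℝ≥0∞)) := by
  rw [gaussianReal_of_var_ne_zero 0 one_ne_zero]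
  rfl

lemma gauss_smul_eq {a : ℝ} (x : ℝ) :
    (gaussianPDFReal 0 1 x).toNNReal • rexp (a * x^2)
      = (Real.sqrt (2*π))⁻¹ * rexp (-(1/2 - a) * x^2) := by
  rw [NNReal.smul_def, Real.coe_toNNReal _ (gaussianPDFReal_nonneg 0 1 x), smul_eq_mul]
  simp only [gaussianPDFReal, NNReal.coe_one, mul_one, sub_zero]
  rw [mul_assoc, ← Real.exp_add]
  ring_nf

lemma gauss_integrable {a : ℝ} (ha : 2*a < 1) :
    Integrable (fun x => rexp (a * x^2)) (gaussianReal 0 1) := by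
  rw [gauss_rep]
  rw [integrable_withDensity_iff_integrable_smul
    (measurable_gaussianPDFReal 0 1).real_toNNReal]
  have : (fun x => (gaussianPDFReal 0 1 x).toNNReal • rexp (a * x^2))
      = fun x => (Real.sqrt (2*π))⁻¹ * rexp (-(1/2 - a) * x^2) := funext fun x => gauss_smul_eq x
  rw [this]
  exact (integrable_exp_neg_mul_sq (by linarith)).const_mul _

lemma gauss_integral {a : ℝ} (ha : 2*a < 1) :
    ∫ x, rexp (a * x^2) ∂(gaussianReal 0 1) = (Real.sqrt (1 - 2*a))⁻¹ := by
  rw [gauss_rep, integral_withDensity_eq_integral_smul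
    (measurable_gaussianPDFReal 0 1).real_toNNReal]
  simp_rw [gauss_smul_eq]
  rw [integral_const_mul]
  have hb : 0 < 1/2 - a := by linarith
  rw [integral_gaussian]
  rw [show (1:ℝ) - 2*a = 2*(1/2-a) by ring]
  have h2 : (0:ℝ) < 2 := by norm_num
  have hπ : 0 < π := Real.pi_pos
  have hs2 : (0:ℝ) < Real.sqrt 2 := Real.sqrt_pos.mpr h2
  have hsπ : (0:ℝ) < Real.sqrt π := Real.sqrt_pos.mpr hπ
  have hsb : (0:ℝ) < Real.sqrt (1/2-a) := Real.sqrt_pos.mpr hb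
  rw [Real.sqrt_div hπ.le, Real.sqrt_mul h2.le, Real.sqrt_mul h2.le]
  field_simp

lemma mgf_sq_gauss {Ω : Type*} [MeasurableSpace Ω] (μ : Measure Ω) [IsProbabilityMeasure μ]
    (X : Ω → ℝ) (hX : Measurable X) (hg : Measure.map X μ = gaussianReal 0 1)
    (c lam : ℝ) (h : 2 * (lam * c) < 1) :
    Integrable (fun ω => rexp (lam * (c * X ω ^ 2))) μ ∧
      ∫ ω, rexp (lam * (c * X ω ^ 2)) ∂μ = (Real.sqrt (1 - 2 * (lam * c)))⁻¹ := by
  have hfeq : ∀ x : ℝ, rexp (lam * c * x ^ 2) = rexp (lam * (c * x ^ 2)) := fun x => by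
    rw [mul_assoc]
  have hmeasg : AEStronglyMeasurable (fun x : ℝ => rexp (lam * (c * x ^ 2)))
      (Measure.map X μ) :=
    (((measurable_id.pow_const 2).const_mul c).const_mul lam).exp.aestronglyMeasurable
  have hint2 : Integrable (fun x : ℝ => rexp (lam * (c * x ^ 2))) (Measure.map X μ) := by
    rw [hg]
    exact (gauss_integrable h).congr (Filter.Eventually.of_forall hfeq)
  constructor
  · exact (integrable_map_measure hmeasg hX.aemeasurable).mp hint2
  · rw [← integral_map hX.aemeasurable hmeasg, hg, ← gauss_integral h]
    exact integral_congr_ae (Filter.Eventually.of_forall fun x => (hfeq x).symm)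

set_option maxHeartbeats 1000000 in
/-- Diagonal case of the Gaussian quadratic-form concentration inequality:
for i.i.d. standard Gaussians `ξ_j` and nonnegative weights `s_j = σ_j²`,
`P(Σ s_j ξ_j² > Σ s_j + 2√(t Σ s_j²) + 2 t max_j s_j) ≤ e^{-t}`. -/
theorem stmt_6 {Ω : Type*} [MeasurableSpace Ω] (μ : Measure Ω) [IsProbabilityMeasure μ]
    (l : ℕ) (hl : 0 < l) (ξ : Fin l → Ω → ℝ)
    (hmeas : ∀ j, Measurable (ξ j))
    (hgauss : ∀ j, Measure.map (ξ j) μ = gaussianReal 0 1)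
    (hindep : iIndepFun ξ μ)
    (s : Fin l → ℝ) (hs : ∀ j, 0 ≤ s j) (t : ℝ) (ht : 0 ≤ t) :
    μ {ω | (∑ j, s j) + 2 * Real.sqrt (t * ∑ j, (s j) ^ 2) + 2 * t * (⨆ j, s j)
        < ∑ j, s j * (ξ j ω) ^ 2}
      ≤ ENNReal.ofReal (Real.exp (-t)) := by
  have hne : Nonempty (Fin l) := ⟨⟨0, hl⟩⟩
  set b := ⨆ j, s j with hbdef
  set v := ∑ j, (s j)^2 with hvdef
  set S := ∑ j, s j with hSdef
  have hbdd : BddAbove (Set.range s) := (Set.finite_range s).bddAbove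
  have hsb : ∀ j, s j ≤ b := fun j => le_ciSup hbdd j
  have hb0 : 0 ≤ b := (hs ⟨0, hl⟩).trans (hsb ⟨0, hl⟩)
  rcases ht.eq_or_lt with ht0 | htpos
  · rw [← ht0]
    simp only [neg_zero, Real.exp_zero, ENNReal.ofReal_one]
    exact prob_le_one
  have hv0 : 0 ≤ v := Finset.sum_nonneg fun j _ => sq_nonneg _
  rcases hv0.eq_or_lt with hveq | hvpos
  · have hz : ∀ j, s j = 0 := by
      intro j
      have h := (Finset.sum_eq_zero_iff_of_nonneg (fun j _ => sq_nonneg (s j))).mp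
        hveq.symm j (Finset.mem_univ j)
      exact pow_eq_zero_iff two_ne_zero |>.mp h
    have hbz : b = 0 := by
      rw [hbdef]
      simp [hz]
    have hset : {ω | S + 2 * Real.sqrt (t * v) + 2 * t * b < ∑ j, s j * (ξ j ω) ^ 2} = ∅ := by
      ext ω
      simp only [Set.mem_setOf_eq, Set.mem_empty_iff_false, iff_false, not_lt]
      have h1 : S = 0 := Finset.sum_eq_zero fun j _ => hz j
      have h2 : v = 0 := hveq.symm
      have h3 : ∑ j, s j * (ξ j ω)^2 = 0 := Finset.sum_eq_zero fun j _ => by rw [hz j]; ring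
      rw [h1, h2, h3, hbz]
      simp
    rw [hset]
    simp
  -- main case
  have hbpos : 0 < b := by
    by_contra hbneg
    push_neg at hbneg
    have : ∀ j, s j = 0 := fun j => le_antisymm ((hsb j).trans hbneg) (hs j)
    have : v = 0 := Finset.sum_eq_zero fun j _ => by rw [this j]; ring
    exact absurd this hvpos.ne'
  have hst : 0 < Real.sqrt t := Real.sqrt_pos.mpr htpos
  have hsv : 0 < Real.sqrt v := Real.sqrt_pos.mpr hvpos
  set D := Real.sqrt v + 2 * b * Real.sqrt t with hDdef
  have hD : 0 < D := by positivity
  set lam := Real.sqrt t / D with hlamdef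
  have hlam0 : 0 < lam := by positivity
  have hlb : 2 * lam * b < 1 := by
    have h1 : 2 * lam * b = 2 * b * Real.sqrt t / D := by rw [hlamdef]; ring
    rw [h1, div_lt_one hD, hDdef]
    nlinarith
  have h1lb : 1 - 2 * lam * b = Real.sqrt v / D := by
    rw [hlamdef]
    field_simp
    rw [hDdef]; ring
  have h1lbpos : 0 < 1 - 2 * lam * b := by rw [h1lb]; positivity
  set Y : Fin l → Ω → ℝ := fun j => (fun x => s j * x^2) ∘ (ξ j) with hYdef
  have hYmeas : ∀ j, Measurable (Y j) := fun j =>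
    ((measurable_id.pow_const 2).const_mul (s j)).comp (hmeas j)
  have hYindep : iIndepFun Y μ :=
    hindep.comp _ fun j => (measurable_id.pow_const 2).const_mul (s j)
  have haj : ∀ j, 2 * (lam * s j) < 1 := fun j => by nlinarith [hsb j, hs j]
  have hint : ∀ j, Integrable (fun ω => rexp (lam * Y j ω)) μ := fun j =>
    (mgf_sq_gauss μ (ξ j) (hmeas j) (hgauss j) (s j) lam (haj j)).1
  have hmgf : ∀ j, mgf (Y j) μ lam = (Real.sqrt (1 - 2 * (lam * s j)))⁻¹ := fun j =>
    (mgf_sq_gauss μ (ξ j) (hmeas j) (hgauss j) (s j) lam (haj j)).2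
  -- Chernoff
  set ε := S + 2 * Real.sqrt (t * v) + 2 * t * b with hεdef
  have hintsum : Integrable (fun ω => rexp (lam * (∑ j, Y j) ω)) μ :=
    hYindep.integrable_exp_mul_sum hYmeas fun i _ => hint i
  have hcher := measure_ge_le_exp_mul_mgf (X := ∑ j, Y j) (μ := μ) (t := lam) ε hlam0.le hintsum
  rw [hYindep.mgf_sum hYmeas] at hcher
  -- bound the product of mgfs
  have hterm : ∀ j, (Real.sqrt (1 - 2 * (lam * s j)))⁻¹
      ≤ rexp (lam * s j + lam^2 * (s j)^2 / (1 - 2 * lam * b)) := by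
    intro j
    set u := 2 * (lam * s j) with hudef
    have hu0 : 0 ≤ u := mul_nonneg (by norm_num) (mul_nonneg hlam0.le (hs j))
    have huw : u ≤ 2 * lam * b := by nlinarith [hsb j]
    have hu1 : u < 1 := lt_of_le_of_lt huw hlb
    have h1u : 0 < 1 - u := by linarith
    have hlog := core_log_ineq hu0 hu1
    have hmono : u^2 / (2 * (1 - u)) ≤ u^2 / (2 * (1 - 2 * lam * b)) := by
      apply div_le_div_of_nonneg_left (sq_nonneg u) (by linarith) (by linarith)
    have hexp : (Real.sqrt (1 - u))⁻¹ = rexp (-(Real.log (1 - u)) / 2) := by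
      rw [show -(Real.log (1-u)) / 2 = -(Real.log (Real.sqrt (1-u))) by
          rw [Real.log_sqrt h1u.le]; ring,
        Real.exp_neg, Real.exp_log (Real.sqrt_pos.mpr h1u)]
    rw [hexp]
    apply Real.exp_le_exp.mpr
    have : -(Real.log (1 - u)) / 2 ≤ (u + u^2/(2*(1 - 2*lam*b))) / 2 := by linarith
    calc -(Real.log (1-u)) / 2 ≤ (u + u^2/(2*(1 - 2*lam*b))) / 2 := this
      _ = lam * s j + lam^2 * (s j)^2 / (1 - 2*lam*b) := by
          rw [hudef]; field_simp
  have hprodbound : ∏ j, mgf (Y j) μ lam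
      ≤ rexp (lam * S + lam^2 * v / (1 - 2 * lam * b)) := by
    calc ∏ j, mgf (Y j) μ lam
        = ∏ j, (Real.sqrt (1 - 2 * (lam * s j)))⁻¹ := Finset.prod_congr rfl fun j _ => hmgf j
      _ ≤ ∏ j, rexp (lam * s j + lam^2 * (s j)^2 / (1 - 2 * lam * b)) :=
          Finset.prod_le_prod (fun j _ => by positivity) (fun j _ => hterm j)
      _ = rexp (∑ j, (lam * s j + lam^2 * (s j)^2 / (1 - 2 * lam * b))) :=
          (Real.exp_sum _ _).symm
      _ = rexp (lam * S + lam^2 * v / (1 - 2 * lam * b)) := by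
          congr 1
          rw [Finset.sum_add_distrib, ← Finset.mul_sum, ← hSdef]
          congr 1
          rw [← Finset.sum_div, ← Finset.mul_sum, ← hvdef]
  -- exponent computation
  have hsqtv : Real.sqrt (t * v) = Real.sqrt t * Real.sqrt v := Real.sqrt_mul ht v
  have hmst : Real.sqrt t * Real.sqrt t = t := Real.mul_self_sqrt ht
  have hmsv : Real.sqrt v * Real.sqrt v = v := Real.mul_self_sqrt hv0
  have hkey : lam * S + lam^2 * v / (1 - 2 * lam * b) - lam * ε = -t := by
    rw [hεdef, h1lb, hsqtv, hlamdef, hDdef]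
    obtain ⟨x, hx⟩ : ∃ x, Real.sqrt t = x := ⟨_, rfl⟩
    obtain ⟨y, hy⟩ : ∃ y, Real.sqrt v = y := ⟨_, rfl⟩
    have hx0 : 0 < x := hx ▸ hst
    have hy0 : 0 < y := hy ▸ hsv
    have hxx : x * x = t := by rw [← hx]; exact hmst
    have hyy : y * y = v := by rw [← hy]; exact hmsv
    rw [hx, hy, ← hxx, ← hyy]
    have hD' : 0 < y + 2 * b * x := by positivity
    field_simp
    ring
  have hfinal : rexp (-lam * ε) * ∏ j, mgf (Y j) μ lam ≤ rexp (-t) := by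
    calc rexp (-lam * ε) * ∏ j, mgf (Y j) μ lam
        ≤ rexp (-lam * ε) * rexp (lam * S + lam^2 * v / (1 - 2 * lam * b)) := by
          exact mul_le_mul_of_nonneg_left hprodbound (Real.exp_nonneg _)
      _ = rexp (lam * S + lam^2 * v / (1 - 2 * lam * b) - lam * ε) := by
          rw [← Real.exp_add]; ring_nf
      _ = rexp (-t) := by rw [hkey]
  -- conclude
  have hsubset : {ω | ε < ∑ j, s j * (ξ j ω) ^ 2} ⊆ {ω | ε ≤ (∑ j, Y j) ω} := by
    intro ω hω
    simp only [Set.mem_setOf_eq, Finset.sum_apply] at *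
    exact le_of_lt hω
  calc μ {ω | ε < ∑ j, s j * (ξ j ω) ^ 2}
      ≤ μ {ω | ε ≤ (∑ j, Y j) ω} := measure_mono hsubset
    _ = ENNReal.ofReal ((μ {ω | ε ≤ (∑ j, Y j) ω}).toReal) :=
        (ENNReal.ofReal_toReal (measure_ne_top μ _)).symm
    _ ≤ ENNReal.ofReal (rexp (-t)) :=
        ENNReal.ofReal_le_ofReal (hcher.trans hfinal)
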